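/- Let f : (0, c) → ℝ be m times differentiable (m ≥ 2) with f⁽ᵐ⁾ > 0 on (0, c), f, f', ..., f⁽ᵐ⁻¹⁾ negative near 0 and positive near c. Then f has exactly one local minimum in (0, c), attained at some t₀ with f(t₀) < 0 and t₀ < x₀, where x₀ is the unique zero of f. -/
import Mathlib

/-- Key lemma: if `g` is differentiable, its derivative is negative on `(0,s)` and
positive on `(s,c)`, `g` is negative near `0` and positive near `c`, then `g` has a
sign change at a unique point `t ∈ (s, c)`. -/
lemma key_sign_change (c : ℝ) (hc : 0 < c) (g : ℝ → ℝ) (hg : Differentiable ℝ g)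
    (s : ℝ) (hs0 : 0 ≤ s) (hsc : s < c)
    (hneg : ∀ x ∈ Set.Ioo 0 s, deriv g x < 0)
    (hpos : ∀ x ∈ Set.Ioo s c, 0 < deriv g x)
    (δ₁ : ℝ) (hδ₁ : 0 < δ₁) (h0 : ∀ x ∈ Set.Ioo 0 δ₁, g x < 0)
    (δ₂ : ℝ) (hδ₂ : 0 < δ₂) (h1 : ∀ x ∈ Set.Ioo (c - δ₂) c, 0 < g x) :
    ∃ t ∈ Set.Ioo s c, (∀ x ∈ Set.Ioo 0 t, g x < 0) ∧ g t = 0 ∧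
      ∀ x ∈ Set.Ioo t c, 0 < g x := by
  have hcont : Continuous g := hg.continuous
  have anti : StrictAntiOn g (Set.Icc 0 s) := by
    apply strictAntiOn_of_deriv_neg (convex_Icc 0 s) hcont.continuousOn
    rw [interior_Icc]; exact hneg
  have mono : StrictMonoOn g (Set.Ico s c) := by
    apply strictMonoOn_of_deriv_pos (convex_Ico s c) hcont.continuousOn
    rw [interior_Ico]; exact hpos
  have hlow : ∀ x, 0 < x → x ≤ s → g x < 0 := by
    intro x hx hxs
    by_cases hxd : x < δ₁
    · exact h0 x ⟨hx, hxd⟩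
    · push_neg at hxd
      have hmem1 : δ₁ / 2 ∈ Set.Icc 0 s := ⟨by linarith, by linarith⟩
      have hmem2 : x ∈ Set.Icc 0 s := ⟨le_of_lt hx, hxs⟩
      have := anti hmem1 hmem2 (by linarith)
      have h2 : g (δ₁ / 2) < 0 := h0 _ ⟨by linarith, by linarith⟩
      linarith
  obtain ⟨p, hsp, hpc, hgp⟩ : ∃ p, s < p ∧ p < c ∧ g p < 0 := by
    rcases eq_or_lt_of_le hs0 with h | h
    · refine ⟨min (δ₁ / 2) (c / 2), ?_, ?_, ?_⟩
      · rw [← h]; positivity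
      · exact lt_of_le_of_lt (min_le_right _ _) (by linarith)
      · exact h0 _ ⟨by positivity, lt_of_le_of_lt (min_le_left _ _) (by linarith)⟩
    · have hgs : g s < 0 := hlow s h le_rfl
      have hev : ∀ᶠ x in nhds s, g x < 0 :=
        (hcont.continuousAt (x := s)).eventually_lt continuousAt_const hgs
      rw [Metric.eventually_nhds_iff] at hev
      obtain ⟨ε, hε, hball⟩ := hev
      refine ⟨min (s + ε / 2) ((s + c) / 2), ?_, ?_, ?_⟩
      · apply lt_min <;> linarith
      · exact lt_of_le_of_lt (min_le_right _ _) (by linarith)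
      · apply hball
        have h1 : min (s + ε / 2) ((s + c) / 2) ≤ s + ε / 2 := min_le_left _ _
        have h2 : s < min (s + ε / 2) ((s + c) / 2) := lt_min (by linarith) (by linarith)
        rw [Real.dist_eq, abs_lt]
        constructor <;> linarith
  obtain ⟨q, hpq, hqc, hgq⟩ : ∃ q, p < q ∧ q < c ∧ 0 < g q := by
    refine ⟨max (c - δ₂ / 2) ((p + c) / 2), ?_, ?_, ?_⟩
    · exact lt_of_lt_of_le (by linarith) (le_max_right _ _)
    · apply max_lt <;> linarith
    · apply h1
      constructor
      · exact lt_of_lt_of_le (by linarith) (le_max_left _ _)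
      · apply max_lt <;> linarith
  have hivt := intermediate_value_Ioo (le_of_lt hpq) hcont.continuousOn
  obtain ⟨t, ht, hgt⟩ := hivt (a := 0) ⟨hgp, hgq⟩
  have hst : s < t := lt_trans hsp ht.1
  have htc : t < c := lt_trans ht.2 hqc
  refine ⟨t, ⟨hst, htc⟩, ?_, hgt, ?_⟩
  · intro x hx
    by_cases hxs : x ≤ s
    · exact hlow x hx.1 hxs
    · push_neg at hxs
      have := mono ⟨le_of_lt hxs, lt_trans hx.2 htc⟩ ⟨le_of_lt hst, htc⟩ hx.2
      rw [hgt] at this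
      exact this
  · intro x hx
    have := mono ⟨le_of_lt hst, htc⟩ ⟨le_of_lt (lt_trans hst hx.1), hx.2⟩ hx.1
    rw [hgt] at this
    exact this

theorem stmt_16 (c : ℝ) (hc : 0 < c) (m : ℕ) (hm : 2 ≤ m) (f : ℝ → ℝ)
    (hdiff : ∀ k < m, Differentiable ℝ (iteratedDeriv k f))
    (ha : ∀ x ∈ Set.Ioo 0 c, 0 < iteratedDeriv m f x)
    (hb : ∃ δ > 0, ∀ x ∈ Set.Ioo 0 δ, ∀ k < m, iteratedDeriv k f x < 0)
    (hcnb : ∃ δ > 0, ∀ x ∈ Set.Ioo (c - δ) c, ∀ k < m, iteratedDeriv k f x > 0) :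
    ∃ t₀ ∈ Set.Ioo 0 c, ∃ x₀ ∈ Set.Ioo 0 c,
      f x₀ = 0 ∧ (∀ y ∈ Set.Ioo 0 c, f y = 0 → y = x₀) ∧
      t₀ < x₀ ∧ f t₀ < 0 ∧ deriv f t₀ = 0 ∧
      StrictAntiOn f (Set.Ioc 0 t₀) ∧ StrictMonoOn f (Set.Ico t₀ c) ∧
      (∀ t ∈ Set.Ioo 0 c, deriv f t = 0 → t = t₀) := by
  obtain ⟨δ₁, hδ₁, hb'⟩ := hb
  obtain ⟨δ₂, hδ₂, hcb'⟩ := hcnb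
  -- downward induction invariant
  have hQ : ∀ j, j ≤ m - 1 → ∃ t ∈ Set.Ioo 0 c,
      (∀ x ∈ Set.Ioo 0 t, iteratedDeriv (m - 1 - j) f x < 0) ∧
      iteratedDeriv (m - 1 - j) f t = 0 ∧
      (∀ x ∈ Set.Ioo t c, 0 < iteratedDeriv (m - 1 - j) f x) := by
    intro j
    induction j with
    | zero =>
      intro _
      have hm1 : m - 1 - 0 = m - 1 := rfl
      rw [hm1]
      obtain ⟨t, ht, h₁, h₂, h₃⟩ := key_sign_change c hc (iteratedDeriv (m - 1) f)
        (hdiff (m - 1) (by omega)) 0 le_rfl hc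
        (by intro x hx; exact absurd hx.2 (not_lt.2 (le_of_lt hx.1)))
        (by
          intro x hx
          have hsucc : m - 1 + 1 = m := by omega
          rw [← iteratedDeriv_succ, hsucc] at *
          exact ha x hx)
        δ₁ hδ₁ (fun x hx => hb' x hx (m - 1) (by omega))
        δ₂ hδ₂ (fun x hx => hcb' x hx (m - 1) (by omega))
      exact ⟨t, ⟨lt_of_le_of_lt le_rfl ht.1, ht.2⟩, h₁, h₂, h₃⟩
    | succ j ih =>
      intro hj
      obtain ⟨s, hs, hneg, hzero, hpos⟩ := ih (by omega)
      have hk1 : m - 1 - (j + 1) + 1 = m - 1 - j := by omega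
      obtain ⟨t, ht, h₁, h₂, h₃⟩ := key_sign_change c hc (iteratedDeriv (m - 1 - (j + 1)) f)
        (hdiff _ (by omega)) s (le_of_lt hs.1) hs.2
        (by
          intro x hx
          rw [← iteratedDeriv_succ, hk1]
          exact hneg x hx)
        (by
          intro x hx
          rw [← iteratedDeriv_succ, hk1]
          exact hpos x hx)
        δ₁ hδ₁ (fun x hx => hb' x hx _ (by omega))
        δ₂ hδ₂ (fun x hx => hcb' x hx _ (by omega))
      exact ⟨t, ⟨lt_trans hs.1 ht.1, ht.2⟩, h₁, h₂, h₃⟩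
  -- level 1 : the derivative
  have h1idx : m - 1 - (m - 2) = 1 := by omega
  obtain ⟨t₀, ht₀, hneg1, hzero1, hpos1⟩ := hQ (m - 2) (by omega)
  rw [h1idx] at hneg1 hzero1 hpos1
  have hfd : Differentiable ℝ f := by
    have := hdiff 0 (by omega); rwa [iteratedDeriv_zero] at this
  have hderivneg : ∀ x ∈ Set.Ioo 0 t₀, deriv f x < 0 := by
    intro x hx; have := hneg1 x hx; rwa [iteratedDeriv_one] at this
  have hderivpos : ∀ x ∈ Set.Ioo t₀ c, 0 < deriv f x := by
    intro x hx; have := hpos1 x hx; rwa [iteratedDeriv_one] at this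
  -- apply the key lemma to f itself
  obtain ⟨x₀, hx₀, hfneg, hfzero, hfpos⟩ := key_sign_change c hc f hfd t₀
    (le_of_lt ht₀.1) ht₀.2 hderivneg hderivpos
    δ₁ hδ₁ (fun x hx => by have := hb' x hx 0 (by omega); rwa [iteratedDeriv_zero] at this)
    δ₂ hδ₂ (fun x hx => by have := hcb' x hx 0 (by omega); rwa [iteratedDeriv_zero] at this)
  refine ⟨t₀, ht₀, x₀, ⟨lt_trans ht₀.1 hx₀.1, hx₀.2⟩, hfzero, ?_, hx₀.1, ?_, ?_, ?_, ?_, ?_⟩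
  · -- uniqueness of the zero
    intro y hy hfy
    rcases lt_trichotomy y x₀ with h | h | h
    · exact absurd hfy (ne_of_lt (hfneg y ⟨hy.1, h⟩))
    · exact h
    · exact absurd hfy.symm (ne_of_lt (hfpos y ⟨h, hy.2⟩))
  · exact hfneg t₀ ⟨ht₀.1, hx₀.1⟩
  · rw [← iteratedDeriv_one]; exact hzero1
  · apply strictAntiOn_of_deriv_neg (convex_Ioc 0 t₀) hfd.continuous.continuousOn
    rw [interior_Ioc]; exact hderivneg
  · apply strictMonoOn_of_deriv_pos (convex_Ico t₀ c) hfd.continuous.continuousOn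
    rw [interior_Ico]; exact hderivpos
  · intro t ht hdt
    rcases lt_trichotomy t t₀ with h | h | h
    · exact absurd hdt (ne_of_lt (hderivneg t ⟨ht.1, h⟩))
    · exact h
    · exact absurd hdt.symm (ne_of_lt (hderivpos t ⟨h, ht.2⟩))
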